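/- If a function f : X → Y between real vector spaces satisfies f(2x+y) + f(2x−y) = 4[f(x+y) + f(x−y)] + 2[f(2x) − 4f(x)] − 6f(y) for all x, y ∈ X, then 12·f(x) = h(x) − g(x) for all x ∈ X, where g(x) = f(2x) − 16f(x) and h(x) = f(2x) − 4f(x); in particular f(x) = (1/12)h(x) − (1/12)g(x) with g quadratic and h quartic. -/
import Mathlib


theorem stmt_5 {X Y : Type*} [AddCommGroup X] [Module ℝ X] [AddCommGroup Y] [Module ℝ Y]
    (f : X → Y)
    (hf : ∀ x y : X, f ((2:ℝ) • x + y) + f ((2:ℝ) • x - y) =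
      (4:ℝ) • (f (x + y) + f (x - y)) + (2:ℝ) • (f ((2:ℝ) • x) - (4:ℝ) • f x) - (6:ℝ) • f y)
    (g h : X → Y)
    (hg : ∀ x : X, g x = f ((2:ℝ) • x) - (16:ℝ) • f x)
    (hh : ∀ x : X, h x = f ((2:ℝ) • x) - (4:ℝ) • f x) :
    (∀ x : X, (12:ℝ) • f x = h x - g x) ∧
    (∀ x : X, f x = (1/12 : ℝ) • h x - (1/12 : ℝ) • g x) ∧
    (∀ x y : X, g (x + y) + g (x - y) = (2:ℝ) • g x + (2:ℝ) • g y) ∧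
    (∀ x y : X, h (x + (2:ℝ) • y) + h (x - (2:ℝ) • y) =
      (4:ℝ) • (h (x + y) + h (x - y) + (6:ℝ) • h y) - (6:ℝ) • h x) := by
  -- f 0 = 0
  have h0 : f 0 = 0 := by
    have e := hf 0 0
    rw [show (2:ℝ) • (0:X) + 0 = 0 by module, show (2:ℝ) • (0:X) - 0 = 0 by module,
      show (0:X) + 0 = 0 by module, show (0:X) - 0 = 0 by module,
      show (2:ℝ) • (0:X) = 0 by module] at e
    have e6 : (6:ℝ) • f 0 = 0 := by linear_combination (norm := module) e
    calc f 0 = (6⁻¹ * 6 : ℝ) • f 0 := by norm_num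
      _ = (6⁻¹:ℝ) • ((6:ℝ) • f 0) := by rw [mul_smul]
      _ = 0 := by rw [e6, smul_zero]
  -- f is even
  have hev : ∀ x : X, f (-x) = f x := by
    intro y
    have e := hf 0 y
    rw [show (2:ℝ) • (0:X) + y = y by module, show (2:ℝ) • (0:X) - y = -y by module,
      show (0:X) + y = y by module, show (0:X) - y = -y by module,
      show (2:ℝ) • (0:X) = 0 by module, h0] at e
    have e3 : (3:ℝ) • f (-y) = (3:ℝ) • f y := by linear_combination (norm := module) -e
    calc f (-y) = (3⁻¹ * 3 : ℝ) • f (-y) := by norm_num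
      _ = (3⁻¹:ℝ) • ((3:ℝ) • f (-y)) := by rw [mul_smul]
      _ = (3⁻¹:ℝ) • ((3:ℝ) • f y) := by rw [e3]
      _ = (3⁻¹ * 3 : ℝ) • f y := by rw [mul_smul]
      _ = f y := by norm_num
  -- key3 : f(x+2y) + f(x-2y) = 4 f(x+y) + 4 f(x-y) + 2 f(2y) - 8 f(y) - 6 f(x)
  have key3 : ∀ x y : X, f (x + (2:ℝ) • y) + f (x - (2:ℝ) • y) =
      (4:ℝ) • f (x + y) + (4:ℝ) • f (x - y) + (2:ℝ) • f ((2:ℝ) • y)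
        - (8:ℝ) • f y - (6:ℝ) • f x := by
    intro x y
    have e := hf y x
    rw [show (2:ℝ) • y + x = x + (2:ℝ) • y by module,
      show (2:ℝ) • y - x = -(x - (2:ℝ) • y) by module,
      show y + x = x + y by module, show y - x = -(x - y) by module,
      hev (x - (2:ℝ) • y), hev (x - y)] at e
    linear_combination (norm := module) e
  -- key4 : f(2x+2y) + f(2x-2y) = 16 f(x+y) + 16 f(x-y) + 2 f(2x) - 32 f(x) + 2 f(2y) - 32 f(y)
  have key4 : ∀ x y : X, f ((2:ℝ) • x + (2:ℝ) • y) + f ((2:ℝ) • x - (2:ℝ) • y) =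
      (16:ℝ) • f (x + y) + (16:ℝ) • f (x - y) + (2:ℝ) • f ((2:ℝ) • x)
        - (32:ℝ) • f x + (2:ℝ) • f ((2:ℝ) • y) - (32:ℝ) • f y := by
    intro x y
    have e := hf x ((2:ℝ) • y)
    have e3 := key3 x y
    linear_combination (norm := module) e + (4:ℝ) • e3
  -- f(3y) = 6 f(2y) - 15 f(y)
  have f3 : ∀ y : X, f ((3:ℝ) • y) = (6:ℝ) • f ((2:ℝ) • y) - (15:ℝ) • f y := by
    intro y
    have e := hf y y
    rw [show (2:ℝ) • y + y = (3:ℝ) • y by module, show (2:ℝ) • y - y = y by module,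
      show y + y = (2:ℝ) • y by module, show y - y = 0 by module, h0] at e
    linear_combination (norm := module) e
  -- f(4y) = 20 f(2y) - 64 f(y)
  have f4 : ∀ y : X, f ((4:ℝ) • y) = (20:ℝ) • f ((2:ℝ) • y) - (64:ℝ) • f y := by
    intro y
    have e := hf y ((2:ℝ) • y)
    rw [show (2:ℝ) • y + (2:ℝ) • y = (4:ℝ) • y by module,
      show (2:ℝ) • y - (2:ℝ) • y = 0 by module, h0,
      show y + (2:ℝ) • y = (3:ℝ) • y by module,
      show y - (2:ℝ) • y = -y by module, hev y, f3 y] at e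
    linear_combination (norm := module) e
  refine ⟨?_, ?_, ?_, ?_⟩
  · intro x
    rw [hg, hh]
    module
  · intro x
    rw [hg, hh]
    module
  · intro x y
    rw [hg (x + y), hg (x - y), hg x, hg y,
      show (2:ℝ) • (x + y) = (2:ℝ) • x + (2:ℝ) • y by module,
      show (2:ℝ) • (x - y) = (2:ℝ) • x - (2:ℝ) • y by module]
    linear_combination (norm := module) key4 x y
  · intro x y
    rw [hh (x + (2:ℝ) • y), hh (x - (2:ℝ) • y), hh (x + y), hh (x - y), hh x, hh y,
      show (2:ℝ) • (x + (2:ℝ) • y) = (2:ℝ) • x + (4:ℝ) • y by module,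
      show (2:ℝ) • (x - (2:ℝ) • y) = (2:ℝ) • x - (4:ℝ) • y by module,
      show (2:ℝ) • (x + y) = (2:ℝ) • x + (2:ℝ) • y by module,
      show (2:ℝ) • (x - y) = (2:ℝ) • x - (2:ℝ) • y by module]
    have e1 := key4 x ((2:ℝ) • y)
    rw [show (2:ℝ) • ((2:ℝ) • y) = (4:ℝ) • y by module, f4 y] at e1
    have e2 := key3 x y
    have e3 := key4 x y
    linear_combination (norm := module) e1 + (12:ℝ) • e2 - (4:ℝ) • e3
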